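/- arXiv:1001.4332 — 8 statements merged into one kernel-verified Lean document; each statement's English description precedes it below -/
import Mathlib

section
/- Let n ≥ 4 be an integer and let E = EuclideanSpace ℝ (Fin n). Let S : E →ₗ[ℝ] E be a symmetric (self-adjoint) linear operator with trace τ, and let v ∈ E. Assume that for all x, y, u ∈ E: (1/(n−2)) * (⟪x,u⟫*⟪S y, v⟫ − ⟪x,v⟫*⟪S y, u⟫ + ⟪y,v⟫*⟪S x, u⟫ − ⟪y,u⟫*⟪S x, v⟫) − (τ/((n−1)*(n−2))) * (⟪x,u⟫*⟪y,v⟫ − ⟪x,v⟫*⟪y,u⟫) = 0. Then either v = 0, or S v = 0 and there exists c ∈ ℝ such that S w = c • w for every w ∈ E with ⟪w, v⟫ = 0. -/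
open scoped RealInnerProductSpace

/-- Linear-algebraic content of the Proposition: if the conformally flat curvature
expression built from a symmetric operator `S` with trace `τ` annihilates `v`
(in the sense of the displayed identity), then either `v = 0`, or `S v = 0` and
`S` is a multiple of the identity on the orthogonal complement of `v`. -/
theorem stmt0 (n : ℕ) (hn : 4 ≤ n)
    (S : EuclideanSpace ℝ (Fin n) →ₗ[ℝ] EuclideanSpace ℝ (Fin n))
    (hS : ∀ x y : EuclideanSpace ℝ (Fin n), ⟪S x, y⟫ = ⟪x, S y⟫)
    (τ : ℝ) (hτ : τ = LinearMap.trace ℝ (EuclideanSpace ℝ (Fin n)) S)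
    (v : EuclideanSpace ℝ (Fin n))
    (hcond : ∀ x y u : EuclideanSpace ℝ (Fin n),
      (1 / ((n : ℝ) - 2)) * (⟪x, u⟫ * ⟪S y, v⟫ - ⟪x, v⟫ * ⟪S y, u⟫
        + ⟪y, v⟫ * ⟪S x, u⟫ - ⟪y, u⟫ * ⟪S x, v⟫)
      - (τ / (((n : ℝ) - 1) * ((n : ℝ) - 2))) *
          (⟪x, u⟫ * ⟪y, v⟫ - ⟪x, v⟫ * ⟪y, u⟫) = 0) :
    v = 0 ∨ (S v = 0 ∧ ∃ c : ℝ, ∀ w : EuclideanSpace ℝ (Fin n),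
      ⟪w, v⟫ = 0 → S w = c • w) := by
  by_cases hv : v = 0
  · exact Or.inl hv
  right
  haveI : NeZero n := ⟨by omega⟩
  have hn4 : (4 : ℝ) ≤ (n : ℝ) := by exact_mod_cast hn
  have hn2 : ((n : ℝ) - 2) ≠ 0 := by nlinarith
  have hn1 : ((n : ℝ) - 1) ≠ 0 := by nlinarith
  set k : ℝ := τ / ((n : ℝ) - 1) with hk
  have hkτ : k * ((n : ℝ) - 1) = τ := by
    rw [hk, div_mul_cancel₀ _ hn1]
  -- purely algebraic cleanup lemma
  have key : ∀ E1 E2 : ℝ,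
      (1 / ((n : ℝ) - 2)) * E1 - (τ / (((n : ℝ) - 1) * ((n : ℝ) - 2))) * E2 = 0 →
      E1 = k * E2 := by
    intro E1 E2 h
    field_simp at h
    rw [hk, div_mul_eq_mul_div, eq_div_iff hn1]
    have h2 : ((n : ℝ) - 2) * (E1 * ((n : ℝ) - 1) - τ * E2) = 0 := by linear_combination ((n : ℝ) - 2) * h
    have := (mul_eq_zero.mp h2).resolve_left hn2
    linarith
  -- The cleaned-up identity
  have A : ∀ x y u : EuclideanSpace ℝ (Fin n),
      ⟪x, u⟫ * ⟪S y, v⟫ - ⟪x, v⟫ * ⟪S y, u⟫ + ⟪y, v⟫ * ⟪S x, u⟫ - ⟪y, u⟫ * ⟪S x, v⟫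
        = k * (⟪x, u⟫ * ⟪y, v⟫ - ⟪x, v⟫ * ⟪y, u⟫) :=
    fun x y u => key _ _ (hcond x y u)
  -- an orthonormal basis whose first vector is parallel to v
  have hvnorm : ‖v‖ ≠ 0 := norm_ne_zero_iff.mpr hv
  set v₀ : EuclideanSpace ℝ (Fin n) := ‖v‖⁻¹ • v with hv₀
  have hv₀norm : ‖v₀‖ = 1 := by
    rw [hv₀, norm_smul, norm_inv, norm_norm, inv_mul_cancel₀ hvnorm]
  have horth : Orthonormal ℝ (Set.restrict {(0 : Fin n)} (fun _ => v₀)) := by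
    constructor
    · intro i; exact hv₀norm
    · rintro ⟨i, hi⟩ ⟨j, hj⟩ hij
      simp only [Set.mem_singleton_iff] at hi hj
      exact absurd (Subtype.ext (hi.trans hj.symm)) hij
  obtain ⟨b, hb⟩ := horth.exists_orthonormalBasis_extension_of_card_eq
    (by simp [finrank_euclideanSpace_fin])
  have hb0 : b 0 = v₀ := hb 0 (by simp)
  have hbij : ∀ i j : Fin n, ⟪b i, b j⟫ = if i = j then 1 else 0 :=
    orthonormal_iff_ite.mp b.orthonormal
  have hvv₀ : v = ‖v‖ • v₀ := by rw [hv₀, smul_inv_smul₀ hvnorm]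
  have hbv : ∀ i : Fin n, i ≠ 0 → ⟪b i, v⟫ = 0 := by
    intro i hi
    rw [hvv₀, real_inner_smul_right, ← hb0, hbij]
    simp [hi]
  -- Step A : ⟪S (b i), v⟫ = 0 for i ≠ 0
  have stepA : ∀ i : Fin n, i ≠ 0 → ⟪S (b i), v⟫ = 0 := by
    intro i hi
    obtain ⟨j, hj0, hji⟩ : ∃ j : Fin n, j ≠ 0 ∧ j ≠ i := by
      rcases eq_or_ne i ⟨1, by omega⟩ with h | h
      · refine ⟨⟨2, by omega⟩, ?_, ?_⟩
        · simp [Fin.ext_iff]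
        · subst h; simp [Fin.ext_iff]
      · exact ⟨⟨1, by omega⟩, by simp [Fin.ext_iff], Ne.symm h⟩
    have hA := A (b i) (b j) (b j)
    rw [hbij i j, hbij j j, hbv i hi, hbv j hj0] at hA
    rw [if_neg (fun h => hji h.symm), if_pos rfl] at hA
    simp only [zero_mul, mul_zero, one_mul, sub_zero, zero_sub, zero_add, sub_self,
      mul_one] at hA
    linarith
  -- Step B : S v is a multiple of v
  have hSvexp : S v = (∑ i, ⟪b i, S v⟫ • b i) := (b.sum_repr' (S v)).symm
  set μ : ℝ := ⟪b 0, S v⟫ with hμ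
  have hSv0 : S v = μ • b 0 := by
    rw [hSvexp, Finset.sum_eq_single 0]
    · intro j _ hj
      rw [← hS (b j) v, stepA j hj, zero_smul]
    · intro h; exact absurd (Finset.mem_univ 0) h
  set l : ℝ := μ * ‖v‖⁻¹ with hl
  have hSv : S v = l • v := by
    rw [hSv0, hb0, hv₀, smul_smul, hl]
  -- Step C : S w = (k - l) • w for all w ⊥ v
  have hν : ⟪v, v⟫ ≠ 0 := inner_self_ne_zero.mpr hv
  set c : ℝ := k - l with hc
  have stepC : ∀ w : EuclideanSpace ℝ (Fin n), ⟪w, v⟫ = 0 → S w = c • w := by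
    intro w hw
    apply ext_inner_right ℝ
    intro u
    have hA := A v w u
    have hSwv : ⟪S w, v⟫ = 0 := by
      rw [hS w v, hSv, real_inner_smul_right, hw, mul_zero]
    have hSvv : ⟪S v, v⟫ = l * ⟪v, v⟫ := by
      rw [hSv, real_inner_smul_left]
    have hSvu : ⟪S v, u⟫ = l * ⟪v, u⟫ := by
      rw [hSv, real_inner_smul_left]
    rw [hSwv, hSvv, hSvu, hw] at hA
    have h0 : ⟪v, v⟫ * (⟪S w, u⟫ - c * ⟪w, u⟫) = 0 := by
      rw [hc]; linear_combination -hA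
    have h1 := (mul_eq_zero.mp h0).resolve_left hν
    rw [real_inner_smul_left]
    linarith
  -- Step D : trace computation forces l = 0
  have htr : τ = ∑ i, ⟪b i, S (b i)⟫ := by
    rw [hτ, LinearMap.trace_eq_matrix_trace ℝ b.toBasis S, Matrix.trace]
    congr 1
    ext i
    rw [Matrix.diag_apply, LinearMap.toMatrix_apply, b.coe_toBasis,
      b.coe_toBasis_repr_apply, b.repr_apply_apply]
  have hterm : ∀ i : Fin n, i ≠ 0 → ⟪b i, S (b i)⟫ = c := by
    intro i hi
    rw [stepC (b i) (hbv i hi), real_inner_smul_right, hbij]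
    simp
  have hterm0 : ⟪b 0, S (b 0)⟫ = l := by
    have hSb0 : S (b 0) = ‖v‖⁻¹ • (l • v) := by
      rw [hb0, hv₀, map_smul, hSv]
    have hvv : ⟪v, v⟫ = ‖v‖ ^ 2 := real_inner_self_eq_norm_sq v
    have hx : ∀ a : ℝ, ‖v‖⁻¹ * (‖v‖⁻¹ * (a * ‖v‖ ^ 2)) = a := by
      intro a; field_simp
    rw [hSb0, hb0, hv₀, real_inner_smul_left, real_inner_smul_right,
      real_inner_smul_right, hvv]
    exact hx l
  have hsum : τ = l + ((n : ℝ) - 1) * c := by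
    have h0 := Finset.add_sum_erase Finset.univ
      (fun i : Fin n => ⟪b i, S (b i)⟫) (Finset.mem_univ (0 : Fin n))
    have h1 : ∑ i ∈ Finset.univ.erase (0 : Fin n), ⟪b i, S (b i)⟫ = ((n : ℝ) - 1) * c := by
      rw [Finset.sum_congr rfl (fun i hi => hterm i (Finset.ne_of_mem_erase hi)),
        Finset.sum_const, Finset.card_erase_of_mem (Finset.mem_univ _),
        Finset.card_univ, Fintype.card_fin, nsmul_eq_mul,
        Nat.cast_sub (by omega : 1 ≤ n)]
      push_cast
      ring
    rw [htr, ← h0, h1]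
    simp only [hterm0]
  have hl0 : l = 0 := by
    have h2 : l * ((n : ℝ) - 2) = 0 := by
      rw [hc] at hsum
      nlinarith [hkτ, hsum]
    exact (mul_eq_zero.mp h2).resolve_right hn2
  refine ⟨by rw [hSv, hl0, zero_smul], c, stepC⟩
end

section
/- Fix an integer n ≥ 4. Let λ : Fin n → ℝ, let a : Fin n → ℝ, and set t = (∑ i, λ i) / (n − 1). Assume that for all i, j in Fin n with i ≠ j one has (λ i + λ j − t) * a j = 0. Then either a = 0, or there exists k in Fin n such that λ k = 0, λ i = λ j for all i, j ≠ k, and ∑ i, λ i * (a i)^2 = 0. -/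
theorem stmt1 (n : ℕ) (hn : 4 ≤ n) (lam a : Fin n → ℝ)
    (t : ℝ) (ht : t = (∑ i, lam i) / ((n : ℝ) - 1))
    (hcond : ∀ i j : Fin n, i ≠ j → (lam i + lam j - t) * a j = 0) :
    a = 0 ∨ ∃ k : Fin n, lam k = 0 ∧
      (∀ i j : Fin n, i ≠ k → j ≠ k → lam i = lam j) ∧
      ∑ i, lam i * (a i) ^ 2 = 0 := by
  by_cases ha : a = 0
  · exact Or.inl ha
  right
  obtain ⟨k, hk⟩ := Function.ne_iff.mp ha
  simp only [Pi.zero_apply] at hk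
  have hn' : (1 : ℝ) < (n : ℝ) := by
    have : (4 : ℝ) ≤ (n : ℝ) := by exact_mod_cast hn
    linarith
  -- lam i = t - lam k for i ≠ k
  have hlam : ∀ i : Fin n, i ≠ k → lam i = t - lam k := by
    intro i hi
    have h := hcond i k hi
    have h2 : lam i + lam k - t = 0 := by
      rcases mul_eq_zero.mp h with h' | h'
      · exact h'
      · exact absurd h' hk
    linarith
  -- sum computation
  have hcard : ((Finset.univ.erase k).card : ℝ) = (n : ℝ) - 1 := by
    rw [Finset.card_erase_of_mem (Finset.mem_univ k), Finset.card_univ, Fintype.card_fin]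
    have hn1 : 1 ≤ n := by omega
    push_cast [Nat.cast_sub hn1]
    ring
  have hsum : ∑ i, lam i = lam k + ((n : ℝ) - 1) * (t - lam k) := by
    rw [← Finset.add_sum_erase _ lam (Finset.mem_univ k)]
    congr 1
    rw [Finset.sum_congr rfl (fun i hi => hlam i (Finset.ne_of_mem_erase hi)),
      Finset.sum_const, nsmul_eq_mul, hcard]
  have hne1 : (n : ℝ) - 1 ≠ 0 := by linarith
  have htsum : t * ((n : ℝ) - 1) = ∑ i, lam i := by
    rw [ht, div_mul_cancel₀ _ hne1]
  have hlamk : lam k = 0 := by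
    have hn4 : (4 : ℝ) ≤ (n : ℝ) := by exact_mod_cast hn
    have hne : (n : ℝ) - 2 ≠ 0 := by linarith
    have : ((n : ℝ) - 2) * lam k = 0 := by
      linear_combination htsum + hsum
    exact (mul_eq_zero.mp this).resolve_left hne
  have hlam' : ∀ i : Fin n, i ≠ k → lam i = t := by
    intro i hi; rw [hlam i hi, hlamk]; ring
  refine ⟨k, hlamk, fun i j hi hj => by rw [hlam' i hi, hlam' j hj], ?_⟩
  apply Finset.sum_eq_zero
  intro i _
  by_cases hik : i = k
  · rw [hik, hlamk]; ring
  by_cases hai : a i = 0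
  · rw [hai]; ring
  -- a i ≠ 0, i ≠ k : show lam i = 0
  have hit : lam i = t := hlam' i hik
  -- find m ≠ i, m ≠ k
  have hcard2 : ({i, k} : Finset (Fin n)).card < (Finset.univ : Finset (Fin n)).card := by
    have h1 : ({i, k} : Finset (Fin n)).card ≤ 2 := Finset.card_insert_le _ _ |>.trans (by simp)
    have h2 : (Finset.univ : Finset (Fin n)).card = n := by simp
    omega
  have hss : ({i, k} : Finset (Fin n)) ⊂ Finset.univ :=
    Finset.ssubset_univ_iff.mpr (fun h => by rw [h] at hcard2; exact lt_irrefl _ hcard2)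
  obtain ⟨m, _, hm⟩ := Finset.exists_of_ssubset hss
  simp only [Finset.mem_insert, Finset.mem_singleton, not_or] at hm
  obtain ⟨hmi, hmk⟩ := hm
  have hmt : lam m = t := hlam' m hmk
  have h := hcond m i hmi
  have h2 : lam m + lam i - t = 0 := by
    rcases mul_eq_zero.mp h with h' | h'
    · exact h'
    · exact absurd h' hai
  have ht0 : t = 0 := by rw [hmt, hit] at h2; linarith
  rw [hit, ht0]; ring
end

section
/- Fix an integer n ≥ 4. Let λ : Fin n → ℝ, let a : Fin n → ℝ, and set t = (∑ i, λ i) / (n − 1). Assume that for all i, j in Fin n with i ≠ j one has (λ i + λ j − t) * a j = 0. If there exist i ≠ j in Fin n with a i ≠ 0 and a j ≠ 0, then λ k = 0 for every k in Fin n. -/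
theorem stmt2 (n : ℕ) (hn : 4 ≤ n) (lam a : Fin n → ℝ)
    (t : ℝ) (ht : t = (∑ i, lam i) / ((n : ℝ) - 1))
    (hcond : ∀ i j : Fin n, i ≠ j → (lam i + lam j - t) * a j = 0)
    (i j : Fin n) (hij : i ≠ j) (hai : a i ≠ 0) (haj : a j ≠ 0) :
    ∀ k : Fin n, lam k = 0 := by
  have key : ∀ k m : Fin n, k ≠ m → a m ≠ 0 → lam k + lam m = t := by
    intro k m hkm ham
    rcases mul_eq_zero.1 (hcond k m hkm) with h | h
    · linarith [h]
    · exact absurd h ham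
  obtain ⟨k, hk⟩ : (({i, j} : Finset (Fin n))ᶜ).Nonempty := by
    rw [← Finset.card_pos, Finset.card_compl]
    have h2 : ({i, j} : Finset (Fin n)).card ≤ 2 := Finset.card_insert_le i {j}
    have hcard : Fintype.card (Fin n) = n := Fintype.card_fin n
    omega
  simp only [Finset.mem_compl, Finset.mem_insert, Finset.mem_singleton, not_or] at hk
  obtain ⟨hki, hkj⟩ := hk
  have e1 := key k i hki hai
  have e2 := key k j hkj haj
  have e3 := key j i hij.symm hai
  have hall : ∀ m, lam m = lam i := by
    intro m
    by_cases hmi : m = i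
    · rw [hmi]
    by_cases hmj : m = j
    · rw [hmj]; linarith
    have := key m i hmi hai
    linarith
  have hsum : (∑ m, lam m) = n * lam i := by
    rw [Finset.sum_congr rfl (fun m _ => hall m)]
    simp [mul_comm]
  rw [hsum] at ht
  have hn4 : (4 : ℝ) ≤ (n : ℝ) := by exact_mod_cast hn
  have hn1 : (n : ℝ) - 1 ≠ 0 := by linarith
  have ht2 : t = 2 * lam i := by linarith
  rw [ht2, eq_div_iff hn1] at ht
  have hli : lam i = 0 := by nlinarith
  intro m
  rw [hall m, hli]
end

section
/- Fix an integer n ≥ 4. Let λ : Fin n → ℝ, set t = (∑ i, λ i) / (n − 1), and let h : Fin n → Fin n → Fin n → ℝ be totally symmetric: h i j k = h j i k = h i k j for all i, j, k. Assume the semiparallelity equations: for all a, b, c, d, e in Fin n, (λ a + λ b − t) * (h c d b * δ a e − h c d a * δ b e − δ d b * h c a e + δ d a * h c b e − δ c b * h d a e + δ c a * h d b e) = 0, where δ i j = 1 if i = j and δ i j = 0 otherwise. If i, k in Fin n satisfy i ≠ k and h i i k ≠ 0, then λ j + λ k = t for every j in Fin n with j ≠ k. -/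
/-- Kronecker delta on `Fin n`, valued in `ℝ`. -/
def kdelta {n : ℕ} (i j : Fin n) : ℝ := if i = j then 1 else 0

theorem stmt5 (n : ℕ) (hn : 4 ≤ n) (lam : Fin n → ℝ)
    (t : ℝ) (ht : t = (∑ i, lam i) / ((n : ℝ) - 1))
    (h : Fin n → Fin n → Fin n → ℝ)
    (hsym : ∀ i j k : Fin n, h i j k = h j i k ∧ h i j k = h i k j)
    (hsp : ∀ a b c d e : Fin n,
      (lam a + lam b - t) *
        (h c d b * kdelta a e - h c d a * kdelta b e
          - kdelta d b * h c a e + kdelta d a * h c b e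
          - kdelta c b * h d a e + kdelta c a * h d b e) = 0)
    (i k : Fin n) (hik : i ≠ k) (hiik : h i i k ≠ 0) :
    ∀ j : Fin n, j ≠ k → lam j + lam k = t := by
  intro j hjk
  by_cases hji : j = i
  · subst hji
    have key := hsp j k j j j
    simp only [kdelta, if_pos rfl, if_neg (Ne.symm hjk), if_neg hjk, if_true,
      eq_self_iff_true] at key
    have hs : h j k j = h j j k := (hsym j k j).2
    rw [hs] at key
    have h3 : (3 : ℝ) * h j j k ≠ 0 := by
      intro hh; exact hiik (by linarith)
    have : (lam j + lam k - t) * (3 * h j j k) = 0 := by rw [← key]; ring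
    rcases mul_eq_zero.1 this with h1 | h2
    · linarith
    · exact absurd h2 h3
  · have key := hsp j k i i j
    simp only [kdelta, if_pos rfl, if_neg (Ne.symm hjk), if_neg hjk, if_true,
      eq_self_iff_true, if_neg hik, if_neg (Ne.symm hji)] at key
    have : (lam j + lam k - t) * h i i k = 0 := by rw [← key]; ring
    rcases mul_eq_zero.1 this with h1 | h2
    · linarith
    · exact absurd h2 hiik
end

section
/- Fix an integer n ≥ 4. Let λ : Fin n → ℝ, set t = (∑ i, λ i) / (n − 1), and let h : Fin n → Fin n → Fin n → ℝ be totally symmetric: h i j k = h j i k = h i k j for all i, j, k. Assume the semiparallelity equations: for all a, b, c, d, e in Fin n, (λ a + λ b − t) * (h c d b * δ a e − h c d a * δ b e − δ d b * h c a e + δ d a * h c b e − δ c b * h d a e + δ c a * h d b e) = 0, where δ i j = 1 if i = j and δ i j = 0 otherwise. If there exist i, k in Fin n with i ≠ k and h i i k ≠ 0, then λ i = λ j for every j in Fin n with j ≠ k, and λ k = 0. -/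
theorem stmt6 (n : ℕ) (hn : 4 ≤ n) (lam : Fin n → ℝ)
    (t : ℝ) (ht : t = (∑ i, lam i) / ((n : ℝ) - 1))
    (h : Fin n → Fin n → Fin n → ℝ)
    (hsym : ∀ i j k : Fin n, h i j k = h j i k ∧ h i j k = h i k j)
    (hsp : ∀ a b c d e : Fin n,
      (lam a + lam b - t) *
        (h c d b * kdelta a e - h c d a * kdelta b e
          - kdelta d b * h c a e + kdelta d a * h c b e
          - kdelta c b * h d a e + kdelta c a * h d b e) = 0)
    (i k : Fin n) (hik : i ≠ k) (hiik : h i i k ≠ 0) :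
    (∀ j : Fin n, j ≠ k → lam i = lam j) ∧ lam k = 0 := by
  have key : ∀ j : Fin n, j ≠ k → lam j + lam k = t := by
    intro j hjk
    have H := hsp j k i i j
    have d1 : kdelta j j = (1:ℝ) := by simp [kdelta]
    have d2 : kdelta k j = (0:ℝ) := by simp [kdelta, Ne.symm hjk]
    have d3 : kdelta i k = (0:ℝ) := by simp [kdelta, hik]
    by_cases hij : i = j
    · subst hij
      have hs : h i k i = h i i k := ((hsym i i k).2).symm
      rw [d1, d2, d3, hs] at H
      have H' : (lam i + lam k - t) * (3 * h i i k) = 0 := by linarith [H]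
      rcases mul_eq_zero.mp H' with h1 | h2
      · linarith
      · exfalso; apply hiik; linarith
    · have d4 : kdelta i j = (0:ℝ) := by simp [kdelta, hij]
      rw [d1, d2, d3, d4] at H
      have H' : (lam j + lam k - t) * h i i k = 0 := by linarith [H]
      rcases mul_eq_zero.mp H' with h1 | h2
      · linarith
      · exact absurd h2 hiik
  have hik' := key i hik
  constructor
  · intro j hjk
    have := key j hjk
    linarith
  · have hn1 : (1:ℕ) ≤ n := by omega
    have hne : ((n:ℝ) - 1) ≠ 0 := by
      have : (4:ℝ) ≤ (n:ℝ) := by exact_mod_cast hn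
      linarith
    have hsum : ∑ j, lam j = t * ((n:ℝ) - 1) := by
      rw [ht]; field_simp
    have hmemk : k ∈ Finset.univ := Finset.mem_univ k
    have hsplit : ∑ j, lam j = lam k + ∑ j ∈ Finset.univ.erase k, lam j :=
      (Finset.add_sum_erase _ _ hmemk).symm
    have herase : ∑ j ∈ Finset.univ.erase k, lam j = ((n:ℝ) - 1) * (t - lam k) := by
      rw [Finset.sum_congr rfl (fun j hj => show lam j = t - lam k by
        have := key j (Finset.ne_of_mem_erase hj); linarith)]
      rw [Finset.sum_const, Finset.card_erase_of_mem hmemk, Finset.card_univ,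
        Fintype.card_fin, nsmul_eq_mul]
      rw [Nat.cast_sub hn1]
      push_cast
      ring
    have hn2 : ((n:ℝ) - 2) ≠ 0 := by
      have : (4:ℝ) ≤ (n:ℝ) := by exact_mod_cast hn
      linarith
    have : ((n:ℝ) - 2) * lam k = 0 := by
      rw [hsplit, herase] at hsum
      ring_nf at hsum ⊢
      linarith
    exact (mul_eq_zero.mp this).resolve_left hn2
end

section
/- Fix an integer n ≥ 4. Let λ : Fin n → ℝ, set t = (∑ i, λ i) / (n − 1), and let h : Fin n → Fin n → Fin n → ℝ be totally symmetric: h i j k = h j i k = h i k j for all i, j, k. Assume the semiparallelity equations: for all a, b, c, d, e in Fin n, (λ a + λ b − t) * (h c d b * δ a e − h c d a * δ b e − δ d b * h c a e + δ d a * h c b e − δ c b * h d a e + δ c a * h d b e) = 0, where δ i j = 1 if i = j and δ i j = 0 otherwise. If i, k in Fin n satisfy i ≠ k and λ i + λ k ≠ t, then h i i k = 0 and 2 * (h i k k) = h i i i. -/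
theorem stmt7 (n : ℕ) (hn : 4 ≤ n) (lam : Fin n → ℝ)
    (t : ℝ) (ht : t = (∑ i, lam i) / ((n : ℝ) - 1))
    (h : Fin n → Fin n → Fin n → ℝ)
    (hsym : ∀ i j k : Fin n, h i j k = h j i k ∧ h i j k = h i k j)
    (hsp : ∀ a b c d e : Fin n,
      (lam a + lam b - t) *
        (h c d b * kdelta a e - h c d a * kdelta b e
          - kdelta d b * h c a e + kdelta d a * h c b e
          - kdelta c b * h d a e + kdelta c a * h d b e) = 0)
    (i k : Fin n) (hik : i ≠ k) (hlik : lam i + lam k ≠ t) :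
    h i i k = 0 ∧ 2 * h i k k = h i i i := by
  have hf : lam i + lam k - t ≠ 0 := sub_ne_zero.mpr hlik
  have E1 := hsp i k i i i
  have E2 := hsp i k i i k
  simp only [kdelta, if_pos rfl, if_neg hik, if_neg hik.symm,
    if_true, mul_one, mul_zero, zero_mul, one_mul, sub_zero, zero_sub] at E1 E2
  have E1' := (mul_eq_zero.mp E1).resolve_left hf
  have E2' := (mul_eq_zero.mp E2).resolve_left hf
  have hs : h i k i = h i i k := (hsym i k i).2
  constructor <;> linarith
end

section
/- Fix an integer n ≥ 4. Let λ : Fin n → ℝ, set t = (∑ i, λ i) / (n − 1), and let h : Fin n → Fin n → Fin n → ℝ be totally symmetric: h i j k = h j i k = h i k j for all i, j, k. Assume the semiparallelity equations: for all a, b, c, d, e in Fin n, (λ a + λ b − t) * (h c d b * δ a e − h c d a * δ b e − δ d b * h c a e + δ d a * h c b e − δ c b * h d a e + δ c a * h d b e) = 0, where δ i j = 1 if i = j and δ i j = 0 otherwise. If there exists i in Fin n with h i i i ≠ 0, then λ i = 0 and λ j = λ k for all j, k in Fin n with j ≠ i and k ≠ i. -/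
theorem stmt8 (n : ℕ) (hn : 4 ≤ n) (lam : Fin n → ℝ)
    (t : ℝ) (ht : t = (∑ i, lam i) / ((n : ℝ) - 1))
    (h : Fin n → Fin n → Fin n → ℝ)
    (hsym : ∀ i j k : Fin n, h i j k = h j i k ∧ h i j k = h i k j)
    (hsp : ∀ a b c d e : Fin n,
      (lam a + lam b - t) *
        (h c d b * kdelta a e - h c d a * kdelta b e
          - kdelta d b * h c a e + kdelta d a * h c b e
          - kdelta c b * h d a e + kdelta c a * h d b e) = 0)
    (i : Fin n) (hiii : h i i i ≠ 0) :
    lam i = 0 ∧ ∀ j k : Fin n, j ≠ i → k ≠ i → lam j = lam k := by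
  have key : ∀ j : Fin n, j ≠ i → lam i + lam j = t := by
    intro j hj
    by_contra hne
    have hs : lam i + lam j - t ≠ 0 := sub_ne_zero.mpr hne
    have e1 := hsp i j i i j
    have e2 := hsp i j j j j
    simp only [kdelta, if_pos rfl, if_neg hj, if_neg (Ne.symm hj), if_true] at e1 e2
    have b1 := (mul_eq_zero.mp e1).resolve_left hs
    have b2 := (mul_eq_zero.mp e2).resolve_left hs
    have h1 : h j j i = h i j j := by
      rw [(hsym j j i).2, (hsym j i j).1]
    have h2 : h j i j = h i j j := (hsym j i j).1
    apply hiii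
    linarith [b1, b2, h1, h2]
  have hij : ∀ j : Fin n, j ≠ i → lam j = t - lam i := by
    intro j hj; have := key j hj; linarith
  have hcard : (Finset.univ.erase i).card = n - 1 := by
    simp [Finset.card_erase_of_mem]
  have hsum : ∑ k, lam k = lam i + ((n : ℝ) - 1) * (t - lam i) := by
    rw [← Finset.add_sum_erase _ _ (Finset.mem_univ i)]
    congr 1
    rw [Finset.sum_congr rfl (fun k hk => hij k (Finset.ne_of_mem_erase hk)),
      Finset.sum_const, hcard, nsmul_eq_mul]
    congr 1
    have h1n : 1 ≤ n := by omega
    push_cast [Nat.cast_sub h1n]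
    ring
  have hn4 : (4 : ℝ) ≤ (n : ℝ) := by exact_mod_cast hn
  have htau : ∑ k, lam k = t * ((n : ℝ) - 1) := by
    have hne1 : (n : ℝ) - 1 ≠ 0 := by linarith
    rw [ht, div_mul_cancel₀ _ hne1]
  have hi0 : lam i = 0 := by
    have : ((n : ℝ) - 2) * lam i = 0 := by
      rw [htau] at hsum; ring_nf at hsum ⊢; linarith
    have h2 : (n : ℝ) - 2 ≠ 0 := by linarith
    exact (mul_eq_zero.mp this).resolve_left h2
  refine ⟨hi0, fun j k hji hki => ?_⟩
  rw [hij j hji, hij k hki]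
end

section
/- Fix an integer n ≥ 4. Let λ : Fin n → ℝ, set t = (∑ i, λ i) / (n − 1), and let h : Fin n → Fin n → Fin n → ℝ be totally symmetric: h i j k = h j i k = h i k j for all i, j, k. Assume the semiparallelity equations: for all a, b, c, d, e in Fin n, (λ a + λ b − t) * (h c d b * δ a e − h c d a * δ b e − δ d b * h c a e + δ d a * h c b e − δ c b * h d a e + δ c a * h d b e) = 0, where δ i j = 1 if i = j and δ i j = 0 otherwise. Assume moreover that h i i e = 0 for all i, e in Fin n, and that there exist pairwise distinct i, j, k in Fin n with h i j k ≠ 0. Then λ l = 0 for every l in Fin n. -/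
theorem stmt9 (n : ℕ) (hn : 4 ≤ n) (lam : Fin n → ℝ)
    (t : ℝ) (ht : t = (∑ i, lam i) / ((n : ℝ) - 1))
    (h : Fin n → Fin n → Fin n → ℝ)
    (hsym : ∀ i j k : Fin n, h i j k = h j i k ∧ h i j k = h i k j)
    (hsp : ∀ a b c d e : Fin n,
      (lam a + lam b - t) *
        (h c d b * kdelta a e - h c d a * kdelta b e
          - kdelta d b * h c a e + kdelta d a * h c b e
          - kdelta c b * h d a e + kdelta c a * h d b e) = 0)
    (hdiag : ∀ i e : Fin n, h i i e = 0)
    (i j k : Fin n) (hij : i ≠ j) (hjk : j ≠ k) (hik : i ≠ k) (hijk : h i j k ≠ 0) :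
    ∀ l : Fin n, lam l = 0 := by
  have hs1 : ∀ a b c, h a b c = h b a c := fun a b c => (hsym a b c).1
  have hs2 : ∀ a b c, h a b c = h a c b := fun a b c => (hsym a b c).2
  have hikj : h i k j ≠ 0 := by rw [← hs2]; exact hijk
  have hjki : h j k i ≠ 0 := by rw [hs2, hs1]; exact hijk
  -- lam i + lam j = t
  have Pij : lam i + lam j = t := by
    have e := hsp i j i i k
    simp [kdelta, hij, hjk, hik, hdiag] at e
    rcases e with e | e
    · linarith
    · exact absurd e hijk
  -- lam i + lam k = t
  have Pik : lam i + lam k = t := by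
    have e := hsp i k i i j
    simp [kdelta, hij, hjk.symm, hik, hdiag] at e
    rcases e with e | e
    · linarith
    · exact absurd e hikj
  -- lam j + lam k = t
  have Pjk : lam j + lam k = t := by
    have e := hsp j k j j i
    simp [kdelta, hij.symm, hjk, hik.symm, hdiag] at e
    rcases e with e | e
    · linarith
    · exact absurd e hjki
  -- lam i + lam a = t for a outside {i,j,k}
  have Pia : ∀ a : Fin n, a ≠ i → a ≠ j → a ≠ k → lam i + lam a = t := by
    intro a hai haj hak
    have e := hsp i a j k a
    simp [kdelta, hij, hij.symm, hjk, hik, hik.symm, hai.symm, haj.symm, hak.symm, hdiag] at e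
    rcases e with e | e
    · linarith
    · exact absurd e hjki
  have hall : ∀ a : Fin n, lam a = t / 2 := by
    have hjhalf : lam j = t / 2 := by linarith
    have hkhalf : lam k = t / 2 := by linarith
    have hihalf : lam i = t / 2 := by linarith
    intro a
    by_cases hai : a = i
    · rw [hai]; exact hihalf
    by_cases haj : a = j
    · rw [haj]; exact hjhalf
    by_cases hak : a = k
    · rw [hak]; exact hkhalf
    have := Pia a hai haj hak
    linarith
  -- sum
  have hsum : (∑ a, lam a) = (n : ℝ) * (t / 2) := by
    rw [Finset.sum_congr rfl (fun a _ => hall a)]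
    simp [mul_comm]
  have hn1 : ((n : ℝ) - 1) ≠ 0 := by
    have : (4 : ℝ) ≤ n := by exact_mod_cast hn
    linarith
  have ht0 : t = 0 := by
    rw [hsum] at ht
    have h2 : t * ((n : ℝ) - 1) = (n : ℝ) * (t / 2) := by
      field_simp at ht; linarith
    have hn2 : ((n : ℝ) - 2) ≠ 0 := by
      have : (4 : ℝ) ≤ n := by exact_mod_cast hn
      linarith
    have : t * ((n : ℝ) - 2) = 0 := by ring_nf; ring_nf at h2; linarith
    rcases mul_eq_zero.mp this with h' | h'
    · exact h'
    · exact absurd h' hn2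
  intro l
  rw [hall l, ht0]
  norm_num
end
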